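/- Let P be a submonoid of a group G and let p₁, q₁, p₂, q₂ ∈ P with p₁⁻¹q₁p₂⁻¹q₂ = e in G. If the operator V_{p₁}* V_{q₁} V_{p₂}* V_{q₂} on ℓ²(P) is nonzero, then the set q₂⁻¹(p₂(q₁⁻¹(p₁P))) is nonempty, where pX := {px : x ∈ X} and p⁻¹X := {y ∈ P : py ∈ X} are computed inside P. -/

import Mathlib

noncomputable section

open ContinuousLinearMap in
/-- Coordinates of the adjoint of a creation-type isometry applied to a basis vector. -/
lemma adj_coord {G : Type*} [Group G] (P : Submonoid G) [DecidableEq P]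
    (V : P → (lp (fun _ : P => ℂ) 2 →L[ℂ] lp (fun _ : P => ℂ) 2))
    (hV : ∀ p s : P, V p (lp.single 2 s (1 : ℂ)) = lp.single 2 (p * s) (1 : ℂ))
    (q t u : P) :
    (adjoint (V q) (lp.single 2 t (1 : ℂ))) u = if q * u = t then 1 else 0 := by
  have h1 : (adjoint (V q) (lp.single 2 t (1 : ℂ))) u
      = (@inner ℂ _ _ (lp.single 2 u (1 : ℂ)) (adjoint (V q) (lp.single 2 t (1 : ℂ)))) := by
    rw [lp.inner_single_left]; simp [RCLike.inner_apply]
  rw [h1, ContinuousLinearMap.adjoint_inner_right, hV, lp.inner_single_left,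
    lp.single_apply]
  simp [RCLike.inner_apply, eq_comm, Pi.single_apply]

open ContinuousLinearMap in
lemma adj_single {G : Type*} [Group G] (P : Submonoid G) [DecidableEq P]
    (V : P → (lp (fun _ : P => ℂ) 2 →L[ℂ] lp (fun _ : P => ℂ) 2))
    (hV : ∀ p s : P, V p (lp.single 2 s (1 : ℂ)) = lp.single 2 (p * s) (1 : ℂ))
    (q t : P) (hno : ¬ ∃ w : P, q * w = t) :
    adjoint (V q) (lp.single 2 t (1 : ℂ)) = 0 := by
  apply lp.ext
  funext u
  rw [adj_coord P V hV q t u]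
  have : ¬ q * u = t := fun hc => hno ⟨u, hc⟩
  simp [this]

open ContinuousLinearMap in
lemma adj_single_eq {G : Type*} [Group G] (P : Submonoid G) [DecidableEq P]
    (V : P → (lp (fun _ : P => ℂ) 2 →L[ℂ] lp (fun _ : P => ℂ) 2))
    (hV : ∀ p s : P, V p (lp.single 2 s (1 : ℂ)) = lp.single 2 (p * s) (1 : ℂ))
    (q t w : P) (hw : q * w = t) :
    adjoint (V q) (lp.single 2 t (1 : ℂ)) = lp.single 2 w (1 : ℂ) := by
  apply lp.ext
  funext u
  rw [adj_coord P V hV q t u, lp.single_apply]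
  by_cases hu : u = w
  · subst hu; simp [hw]
  · have : ¬ q * u = t := by
      intro hc
      apply hu
      have : (q : G) * u = (q : G) * w := by
        rw [← hw] at hc
        exact_mod_cast congrArg (Subtype.val) hc
      exact Subtype.ext (mul_left_cancel this)
    simp [this, hu]

/-- If `p₁⁻¹q₁p₂⁻¹q₂ = e` in `G` and the operator `V_{p₁}* V_{q₁} V_{p₂}* V_{q₂}` on
`ℓ²(P)` is nonzero, then the constructible ideal `q₂⁻¹(p₂(q₁⁻¹(p₁P)))` is nonempty. -/
theorem stmt16 {G : Type*} [Group G] (P : Submonoid G) [DecidableEq P]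
    (V : P → (lp (fun _ : P => ℂ) 2 →L[ℂ] lp (fun _ : P => ℂ) 2))
    (hV : ∀ p s : P, V p (lp.single 2 s (1 : ℂ)) = lp.single 2 (p * s) (1 : ℂ))
    (p₁ q₁ p₂ q₂ : P) (h : (p₁ : G)⁻¹ * q₁ * (p₂ : G)⁻¹ * q₂ = 1)
    (hne : (ContinuousLinearMap.adjoint (V p₁)).comp ((V q₁).comp
      ((ContinuousLinearMap.adjoint (V p₂)).comp (V q₂))) ≠ 0) :
    {y : P | q₂ * y ∈ (fun z => p₂ * z) ''
      {z : P | q₁ * z ∈ (fun w => p₁ * w) '' (Set.univ : Set P)}}.Nonempty := by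
  by_contra hemp
  rw [Set.not_nonempty_iff_eq_empty] at hemp
  apply hne
  set T := (ContinuousLinearMap.adjoint (V p₁)).comp ((V q₁).comp
      ((ContinuousLinearMap.adjoint (V p₂)).comp (V q₂))) with hT
  -- key: adjoint of T kills every basis vector
  have hadj : ∀ u : P, ContinuousLinearMap.adjoint T (lp.single 2 u (1 : ℂ)) = 0 := by
    intro u
    have hTadj : ContinuousLinearMap.adjoint T
        = (ContinuousLinearMap.adjoint (V q₂)).comp ((V p₂).comp
            ((ContinuousLinearMap.adjoint (V q₁)).comp (V p₁))) := by
      rw [hT]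
      simp only [ContinuousLinearMap.adjoint_comp, ContinuousLinearMap.adjoint_adjoint]
      rfl
    rw [hTadj]
    simp only [ContinuousLinearMap.comp_apply]
    rw [hV]
    by_cases hw : ∃ w : P, q₁ * w = p₁ * u
    · obtain ⟨w, hw⟩ := hw
      rw [adj_single_eq P V hV q₁ (p₁ * u) w hw, hV]
      have hno : ¬ ∃ y : P, q₂ * y = p₂ * w := by
        rintro ⟨y, hy⟩
        have : y ∈ ({y : P | q₂ * y ∈ (fun z => p₂ * z) ''
            {z : P | q₁ * z ∈ (fun w => p₁ * w) '' (Set.univ : Set P)}}) := by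
          refine ⟨w, ⟨u, trivial, hw.symm⟩, hy.symm⟩
        rw [hemp] at this
        exact this
      exact adj_single P V hV q₂ (p₂ * w) hno
    · rw [adj_single P V hV q₁ (p₁ * u) hw]
      simp
  -- hence T f has all coordinates zero
  ext f u
  have : (T f) u = (@inner ℂ _ _ (lp.single 2 u (1 : ℂ)) (T f)) := by
    rw [lp.inner_single_left]; simp [RCLike.inner_apply]
  rw [this, ← ContinuousLinearMap.adjoint_inner_left, hadj u]
  simp
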